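/- Let G be an N-function of class C² on (0,∞) with G' = g and suppose 2 ≤ i_G ≤ s_G < ∞ where i_G = inf tg(t)/G(t), s_G = sup tg(t)/G(t). Fix s with max{2−i_G, 0} < s < 1/2 and define H_s(t) = ∫_0^t g(r)^{1-s} G(r)^s / r dr. Then H_s is comparable to g(t)^{1-s} G(t)^s: there exist constants depending only on i_G, s_G, s such that H_s(t) ≈ g(t)^{1-s} G(t)^s for all t > 0. -/

import Mathlib

open Real MeasureTheory Set intervalIntegral

lemma rpow_eq_aux' (k Gv x s : ℝ) (hk : 0 < k) (hG : 0 < Gv) (hx : 0 < x) :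
    (k * Gv / x) ^ (1 - s) * Gv ^ s = k ^ (1 - s) * Gv * x ^ (s - 1) := by
  have h1 : (k * Gv / x) ^ (1 - s) = k ^ (1-s) * Gv ^ (1-s) * (x ^ (1-s))⁻¹ := by
    rw [Real.div_rpow (by positivity) hx.le, Real.mul_rpow hk.le hG.le, div_eq_mul_inv]
  have h2 : Gv ^ (1-s) * Gv ^ s = Gv := by
    rw [← Real.rpow_add hG]; norm_num
  have h3 : x ^ (s-1) * x ^ (1-s) = 1 := by
    rw [← Real.rpow_add hx, show s - 1 + (1-s) = 0 by ring, Real.rpow_zero]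
  have hx1 : (0:ℝ) < x ^ (1-s) := Real.rpow_pos_of_pos hx _
  rw [h1]
  field_simp
  linear_combination h2 - Gv * h3

lemma up_bound (k gv Gv x s : ℝ) (hk : 0 < k) (hg : 0 < gv) (hG : 0 < Gv) (hx : 0 < x)
    (h1s : 0 ≤ 1 - s) (h : x * gv ≤ k * Gv) :
    gv ^ (1 - s) * Gv ^ s ≤ k ^ (1 - s) * Gv * x ^ (s - 1) := by
  have hle : gv ≤ k * Gv / x := by rw [le_div_iff₀ hx]; linarith
  calc gv ^ (1-s) * Gv ^ s ≤ (k * Gv / x) ^ (1-s) * Gv ^ s :=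
        mul_le_mul_of_nonneg_right (Real.rpow_le_rpow hg.le hle h1s)
          (Real.rpow_pos_of_pos hG s).le
    _ = k ^ (1-s) * Gv * x ^ (s-1) := rpow_eq_aux' k Gv x s hk hG hx

lemma low_bound (k gv Gv x s : ℝ) (hk : 0 < k) (hg : 0 < gv) (hG : 0 < Gv) (hx : 0 < x)
    (h1s : 0 ≤ 1 - s) (h : k * Gv ≤ x * gv) :
    k ^ (1 - s) * Gv * x ^ (s - 1) ≤ gv ^ (1 - s) * Gv ^ s := by
  have hle : k * Gv / x ≤ gv := by rw [div_le_iff₀ hx]; linarith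
  calc k ^ (1-s) * Gv * x ^ (s-1) = (k * Gv / x) ^ (1-s) * Gv ^ s :=
        (rpow_eq_aux' k Gv x s hk hG hx).symm
    _ ≤ gv ^ (1-s) * Gv ^ s :=
        mul_le_mul_of_nonneg_right (Real.rpow_le_rpow (by positivity) hle h1s)
          (Real.rpow_pos_of_pos hG s).le

lemma growth_mono (G g : ℝ → ℝ) (α : ℝ)
    (hG' : ∀ t, 0 < t → HasDerivAt G (g t) t)
    (hbd : ∀ t, 0 < t → α * G t ≤ t * g t) :
    MonotoneOn (fun x => G x * x ^ (-α)) (Set.Ioi 0) := by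
  have hderiv : ∀ x : ℝ, 0 < x → HasDerivAt (fun x => G x * x ^ (-α))
      (g x * x ^ (-α) + G x * (-α * x ^ (-α - 1))) x := fun x hx =>
    (hG' x hx).mul (Real.hasDerivAt_rpow_const (Or.inl (ne_of_gt hx)))
  apply monotoneOn_of_deriv_nonneg (convex_Ioi 0)
  · exact fun x hx => (hderiv x hx).continuousAt.continuousWithinAt
  · rw [interior_Ioi]
    exact fun x hx => (hderiv x hx).differentiableAt.differentiableWithinAt
  · rw [interior_Ioi]; intro x hx
    rw [(hderiv x hx).deriv]
    have hb := hbd x hx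
    have h1 : x ^ (-α) = x ^ (-α-1) * x := by
      rw [← Real.rpow_add_one (ne_of_gt hx)]; ring_nf
    have h2 : (0:ℝ) < x ^ (-α-1) := Real.rpow_pos_of_pos hx _
    rw [h1]; nlinarith [mul_nonneg h2.le (sub_nonneg.2 hb)]

lemma growth_anti (G g : ℝ → ℝ) (β : ℝ)
    (hG' : ∀ t, 0 < t → HasDerivAt G (g t) t)
    (hbd : ∀ t, 0 < t → t * g t ≤ β * G t) :
    AntitoneOn (fun x => G x * x ^ (-β)) (Set.Ioi 0) := by
  have hderiv : ∀ x : ℝ, 0 < x → HasDerivAt (fun x => G x * x ^ (-β))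
      (g x * x ^ (-β) + G x * (-β * x ^ (-β - 1))) x := fun x hx =>
    (hG' x hx).mul (Real.hasDerivAt_rpow_const (Or.inl (ne_of_gt hx)))
  apply antitoneOn_of_deriv_nonpos (convex_Ioi 0)
  · exact fun x hx => (hderiv x hx).continuousAt.continuousWithinAt
  · rw [interior_Ioi]
    exact fun x hx => (hderiv x hx).differentiableAt.differentiableWithinAt
  · rw [interior_Ioi]; intro x hx
    rw [(hderiv x hx).deriv]
    have hb := hbd x hx
    have h1 : x ^ (-β) = x ^ (-β-1) * x := by
      rw [← Real.rpow_add_one (ne_of_gt hx)]; ring_nf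
    have h2 : (0:ℝ) < x ^ (-β-1) := Real.rpow_pos_of_pos hx _
    rw [h1]; nlinarith [mul_nonneg h2.le (sub_nonneg.2 hb)]

/-- The auxiliary function H_s(t) = ∫_0^t g(r)^{1-s} G(r)^s / r dr is
comparable to g(t)^{1-s} G(t)^s. -/
theorem Hs_comparable
    (G g : ℝ → ℝ) (iG sG s : ℝ)
    (hGC2 : ContDiffOn ℝ 2 G (Set.Ioi 0))
    (hG' : ∀ t, 0 < t → HasDerivAt G (g t) t)
    (hGpos : ∀ t, 0 < t → 0 < G t)
    (hgpos : ∀ t, 0 < t → 0 < g t)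
    (h2 : 2 ≤ iG) (hle : iG ≤ sG)
    (hbd : ∀ t, 0 < t → iG * G t ≤ t * g t ∧ t * g t ≤ sG * G t)
    (hs₁ : max (2 - iG) 0 < s) (hs₂ : s < 1 / 2) :
    ∃ c₁ c₂ : ℝ, 0 < c₁ ∧ 0 < c₂ ∧ ∀ t, 0 < t →
      c₁ * (g t ^ (1 - s) * G t ^ s) ≤
        (∫ r in (0:ℝ)..t, g r ^ (1 - s) * G r ^ s / r) ∧
      (∫ r in (0:ℝ)..t, g r ^ (1 - s) * G r ^ s / r) ≤
        c₂ * (g t ^ (1 - s) * G t ^ s) := by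
  have hαpos : (0:ℝ) < iG := by linarith
  have hβpos : (0:ℝ) < sG := by linarith
  have hs0 : 0 < s := lt_of_le_of_lt (le_max_right _ _) hs₁
  have hs2α : 2 - iG < s := lt_of_le_of_lt (le_max_left _ _) hs₁
  have h1s : 0 < 1 - s := by linarith
  have hαs : 0 < iG + s - 2 := by linarith
  have hβs : 0 < sG + s - 2 := by linarith
  have hαs1 : 0 < iG + s - 1 := by linarith
  have hβs1 : 0 < sG + s - 1 := by linarith
  have hmono := growth_mono G g iG hG' (fun r hr => (hbd r hr).1)
  have hanti := growth_anti G g sG hG' (fun r hr => (hbd r hr).2)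
  have hgcont : ContinuousOn g (Set.Ioi 0) := by
    have h1 : ContinuousOn (deriv G) (Set.Ioi 0) :=
      hGC2.continuousOn_deriv_of_isOpen isOpen_Ioi (by norm_num)
    exact h1.congr (fun x hx => ((hG' x hx).deriv).symm)
  have hGcont : ContinuousOn G (Set.Ioi 0) :=
    fun x hx => (hG' x hx).continuousAt.continuousWithinAt
  have hφcont : ContinuousOn (fun r => g r ^ (1-s) * G r ^ s / r) (Set.Ioi 0) := by
    apply ContinuousOn.div
    · exact (hgcont.rpow_const (fun x hx => Or.inl (ne_of_gt (hgpos x hx)))).mul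
        (hGcont.rpow_const (fun x hx => Or.inl (ne_of_gt (hGpos x hx))))
    · exact continuousOn_id
    · exact fun x hx => ne_of_gt hx
  refine ⟨iG ^ (1-s) / (sG ^ (1-s) * (sG + s - 1)),
          sG ^ (1-s) / (iG ^ (1-s) * (iG + s - 1)),
          by positivity, by positivity, ?_⟩
  intro t ht
  have hGt := hGpos t ht
  have hgt := hgpos t ht
  set C2 := sG ^ (1-s) * (G t * t ^ (-iG)) with hC2def
  set C1 := iG ^ (1-s) * (G t * t ^ (-sG)) with hC1def
  have hC2pos : 0 < C2 := by positivity
  have hC1pos : 0 < C1 := by positivity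
  -- pointwise bounds on Ioc 0 t
  have hptup : ∀ r ∈ Set.Ioc (0:ℝ) t,
      g r ^ (1-s) * G r ^ s / r ≤ C2 * r ^ (iG + s - 2) := by
    intro r hr
    obtain ⟨hr0, hrt⟩ := hr
    have hGr := hGpos r hr0
    have hgr := hgpos r hr0
    have step1 : g r ^ (1-s) * G r ^ s ≤ sG ^ (1-s) * G r * r ^ (s-1) :=
      up_bound sG (g r) (G r) r s hβpos hgr hGr hr0 h1s.le (hbd r hr0).2
    have step2 : G r ≤ G t * t ^ (-iG) * r ^ iG := by
      have hm := hmono (mem_Ioi.mpr hr0) (mem_Ioi.mpr ht) hrt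
      have hrα : (0:ℝ) < r ^ iG := Real.rpow_pos_of_pos hr0 _
      have hone : r ^ (-iG) * r ^ iG = 1 := by
        rw [← Real.rpow_add hr0, neg_add_cancel, Real.rpow_zero]
      calc G r = G r * r ^ (-iG) * r ^ iG := by rw [mul_assoc, hone, mul_one]
        _ ≤ G t * t ^ (-iG) * r ^ iG := mul_le_mul_of_nonneg_right hm hrα.le
    calc g r ^ (1-s) * G r ^ s / r ≤ sG ^ (1-s) * G r * r ^ (s-1) / r := by
          exact div_le_div_of_nonneg_right step1 hr0.le
      _ = sG ^ (1-s) * G r * r ^ (s-2) := by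
          have hdiv : r ^ (s-2) = r ^ (s-1) / r := by
            rw [show s - 2 = s - 1 - 1 by ring, Real.rpow_sub_one (ne_of_gt hr0)]
          rw [hdiv]; ring
      _ ≤ sG ^ (1-s) * (G t * t ^ (-iG) * r ^ iG) * r ^ (s-2) := by
          apply mul_le_mul_of_nonneg_right _ (Real.rpow_pos_of_pos hr0 _).le
          exact mul_le_mul_of_nonneg_left step2 (Real.rpow_pos_of_pos hβpos _).le
      _ = C2 * r ^ (iG + s - 2) := by
          rw [hC2def, show iG + s - 2 = iG + (s-2) by ring, Real.rpow_add hr0]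
          ring
  have hptlow : ∀ r ∈ Set.Ioc (0:ℝ) t,
      C1 * r ^ (sG + s - 2) ≤ g r ^ (1-s) * G r ^ s / r := by
    intro r hr
    obtain ⟨hr0, hrt⟩ := hr
    have hGr := hGpos r hr0
    have hgr := hgpos r hr0
    have step1 : iG ^ (1-s) * G r * r ^ (s-1) ≤ g r ^ (1-s) * G r ^ s :=
      low_bound iG (g r) (G r) r s hαpos hgr hGr hr0 h1s.le (hbd r hr0).1
    have step2 : G t * t ^ (-sG) * r ^ sG ≤ G r := by
      have hm := hanti (mem_Ioi.mpr hr0) (mem_Ioi.mpr ht) hrt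
      have hrβ : (0:ℝ) < r ^ sG := Real.rpow_pos_of_pos hr0 _
      have hone : r ^ (-sG) * r ^ sG = 1 := by
        rw [← Real.rpow_add hr0, neg_add_cancel, Real.rpow_zero]
      calc G t * t ^ (-sG) * r ^ sG ≤ G r * r ^ (-sG) * r ^ sG :=
            mul_le_mul_of_nonneg_right hm hrβ.le
        _ = G r := by rw [mul_assoc, hone, mul_one]
    calc C1 * r ^ (sG + s - 2)
        = iG ^ (1-s) * (G t * t ^ (-sG) * r ^ sG) * r ^ (s-2) := by
          rw [hC1def, show sG + s - 2 = sG + (s-2) by ring, Real.rpow_add hr0]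
          ring
      _ ≤ iG ^ (1-s) * G r * r ^ (s-2) := by
          apply mul_le_mul_of_nonneg_right _ (Real.rpow_pos_of_pos hr0 _).le
          exact mul_le_mul_of_nonneg_left step2 (Real.rpow_pos_of_pos hαpos _).le
      _ = iG ^ (1-s) * G r * r ^ (s-1) / r := by
          have hdiv : r ^ (s-2) = r ^ (s-1) / r := by
            rw [show s - 2 = s - 1 - 1 by ring, Real.rpow_sub_one (ne_of_gt hr0)]
          rw [hdiv]; ring
      _ ≤ g r ^ (1-s) * G r ^ s / r := div_le_div_of_nonneg_right step1 hr0.le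
  -- integrability
  have hint2 : IntegrableOn (fun r => C2 * r ^ (iG + s - 2)) (Set.Ioc 0 t) := by
    have h := (intervalIntegral.intervalIntegrable_rpow' (a := 0) (b := t)
      (r := iG + s - 2) (by linarith))
    exact ((intervalIntegrable_iff_integrableOn_Ioc_of_le ht.le).mp h).const_mul C2
  have hint1 : IntegrableOn (fun r => C1 * r ^ (sG + s - 2)) (Set.Ioc 0 t) := by
    have h := (intervalIntegral.intervalIntegrable_rpow' (a := 0) (b := t)
      (r := sG + s - 2) (by linarith))
    exact ((intervalIntegrable_iff_integrableOn_Ioc_of_le ht.le).mp h).const_mul C1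
  have hmeas : AEStronglyMeasurable (fun r => g r ^ (1-s) * G r ^ s / r)
      (volume.restrict (Set.Ioc 0 t)) :=
    (hφcont.mono Ioc_subset_Ioi_self).aestronglyMeasurable measurableSet_Ioc
  have hintφ : IntegrableOn (fun r => g r ^ (1-s) * G r ^ s / r) (Set.Ioc 0 t) := by
    apply hint2.mono' hmeas
    filter_upwards [ae_restrict_mem measurableSet_Ioc] with r hr
    have hr0 := hr.1
    have h1 : 0 ≤ g r ^ (1-s) * G r ^ s / r :=
      div_nonneg (mul_nonneg (Real.rpow_nonneg (hgpos r hr0).le _)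
        (Real.rpow_nonneg (hGpos r hr0).le _)) hr0.le
    rw [Real.norm_of_nonneg h1]
    exact hptup r hr
  -- integral computation
  have hcalc2 : ∫ r in Set.Ioc (0:ℝ) t, C2 * r ^ (iG + s - 2)
      = C2 * (t ^ (iG + s - 1) / (iG + s - 1)) := by
    rw [← intervalIntegral.integral_of_le ht.le, intervalIntegral.integral_const_mul,
      integral_rpow (Or.inl (by linarith : (-1:ℝ) < iG + s - 2))]
    rw [Real.zero_rpow (by linarith : iG + s - 2 + 1 ≠ 0), show iG + s - 2 + 1 = iG + s - 1 by ring]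
    ring
  have hcalc1 : ∫ r in Set.Ioc (0:ℝ) t, C1 * r ^ (sG + s - 2)
      = C1 * (t ^ (sG + s - 1) / (sG + s - 1)) := by
    rw [← intervalIntegral.integral_of_le ht.le, intervalIntegral.integral_const_mul,
      integral_rpow (Or.inl (by linarith : (-1:ℝ) < sG + s - 2))]
    rw [Real.zero_rpow (by linarith : sG + s - 2 + 1 ≠ 0), show sG + s - 2 + 1 = sG + s - 1 by ring]
    ring
  -- bounds at t
  have hkey_up : g t ^ (1-s) * G t ^ s ≤ sG ^ (1-s) * G t * t ^ (s-1) :=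
    up_bound sG (g t) (G t) t s hβpos hgt hGt ht h1s.le (hbd t ht).2
  have hkey_low : iG ^ (1-s) * G t * t ^ (s-1) ≤ g t ^ (1-s) * G t ^ s :=
    low_bound iG (g t) (G t) t s hαpos hgt hGt ht h1s.le (hbd t ht).1
  -- simplify C2 * t^(iG+s-1) etc
  have hts : t ^ (-iG) * t ^ (iG + s - 1) = t ^ (s-1) := by
    rw [← Real.rpow_add ht, show -iG + (iG + s - 1) = s - 1 by ring]
  have hts' : t ^ (-sG) * t ^ (sG + s - 1) = t ^ (s-1) := by
    rw [← Real.rpow_add ht, show -sG + (sG + s - 1) = s - 1 by ring]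
  rw [intervalIntegral.integral_of_le ht.le]
  have hA1 : C1 * (t ^ (sG + s - 1) / (sG + s - 1))
      = iG ^ (1-s) * G t * t ^ (s-1) / (sG + s - 1) := by
    rw [hC1def, ← hts']; ring
  have hA2 : C2 * (t ^ (iG + s - 1) / (iG + s - 1))
      = sG ^ (1-s) * G t * t ^ (s-1) / (iG + s - 1) := by
    rw [hC2def, ← hts]; ring
  constructor
  · -- lower bound
    have hmonoInt : ∫ r in Set.Ioc (0:ℝ) t, C1 * r ^ (sG + s - 2)
        ≤ ∫ r in Set.Ioc (0:ℝ) t, g r ^ (1-s) * G r ^ s / r :=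
      setIntegral_mono_on hint1 hintφ measurableSet_Ioc hptlow
    rw [hcalc1, hA1] at hmonoInt
    refine le_trans ?_ hmonoInt
    have heq : iG ^ (1-s) / (sG ^ (1-s) * (sG + s - 1)) * (sG ^ (1-s) * G t * t ^ (s-1))
        = iG ^ (1-s) * G t * t ^ (s-1) / (sG + s - 1) := by
      have hb : (0:ℝ) < sG ^ (1-s) := Real.rpow_pos_of_pos hβpos _
      field_simp
    calc iG ^ (1-s) / (sG ^ (1-s) * (sG + s - 1)) * (g t ^ (1-s) * G t ^ s)
        ≤ iG ^ (1-s) / (sG ^ (1-s) * (sG + s - 1)) * (sG ^ (1-s) * G t * t ^ (s-1)) :=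
          mul_le_mul_of_nonneg_left hkey_up (by positivity)
      _ = iG ^ (1-s) * G t * t ^ (s-1) / (sG + s - 1) := heq
  · -- upper bound
    have hmonoInt : ∫ r in Set.Ioc (0:ℝ) t, g r ^ (1-s) * G r ^ s / r
        ≤ ∫ r in Set.Ioc (0:ℝ) t, C2 * r ^ (iG + s - 2) :=
      setIntegral_mono_on hintφ hint2 measurableSet_Ioc hptup
    rw [hcalc2, hA2] at hmonoInt
    refine hmonoInt.trans ?_
    have heq : sG ^ (1-s) / (iG ^ (1-s) * (iG + s - 1)) * (iG ^ (1-s) * G t * t ^ (s-1))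
        = sG ^ (1-s) * G t * t ^ (s-1) / (iG + s - 1) := by
      have hb : (0:ℝ) < iG ^ (1-s) := Real.rpow_pos_of_pos hαpos _
      field_simp
    calc sG ^ (1-s) * G t * t ^ (s-1) / (iG + s - 1)
        = sG ^ (1-s) / (iG ^ (1-s) * (iG + s - 1)) * (iG ^ (1-s) * G t * t ^ (s-1)) := heq.symm
      _ ≤ sG ^ (1-s) / (iG ^ (1-s) * (iG + s - 1)) * (g t ^ (1-s) * G t ^ s) :=
          mul_le_mul_of_nonneg_left hkey_low (by positivity)
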